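/- Let I be the shot-noise interference of a planar PPP with intensity λ_BS > 0, Rayleigh fading, pathloss g(x) = β(1+x)^{-α} with α > 2, seen beyond radius r. Then its characteristic function B_I(iu) = exp(-2πλ_BS ∫_r^∞ x(1 - 1/(1 - iuTP₀g(x))) dx) satisfies |B_I(iu)| = O(e^{-c u^{2/α}}) as u → ±∞ for some c > 0; in particular B_I(iu) is absolutely integrable over u ∈ ℝ. -/

import Mathlib

open MeasureTheory Real Filter Asymptotics Topology

theorem denom_ne (a : ℝ) : (1 - Complex.I * a) ≠ 0 := by
  intro h
  have := congrArg Complex.re h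
  simp [Complex.sub_re] at this

theorem key_frac (a : ℝ) : 1 - 1/(1 - Complex.I * a) = (-(Complex.I*a))/(1 - Complex.I * a) := by
  field_simp [denom_ne a]
  ring

theorem key_re (x a : ℝ) : ((x:ℂ) * (1 - 1/(1 - Complex.I * a))).re = x*(a^2/(1+a^2)) := by
  rw [key_frac, Complex.re_ofReal_mul]
  congr 1
  simp [Complex.div_re, Complex.normSq_apply]
  ring_nf

theorem one_le_abs_denom (a : ℝ) : 1 ≤ ‖(1 - Complex.I * a)‖ := by
  have h := Complex.abs_re_le_norm (1 - Complex.I * a)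
  simpa [Complex.sub_re] using h

theorem key_abs (x a : ℝ) : ‖(x:ℂ) * (1 - 1/(1 - Complex.I * a))‖ ≤ |x| * |a| := by
  rw [key_frac, norm_mul, norm_div]
  simp only [norm_neg, norm_mul, Complex.norm_I, Complex.norm_real, Real.norm_eq_abs, one_mul]
  have : |a| / ‖(1 - Complex.I * a)‖ ≤ |a| := by
    calc |a| / ‖(1 - Complex.I * a)‖ ≤ |a| / 1 := by
          gcongr
          exact one_le_abs_denom a
      _ = |a| := div_one _
  exact mul_le_mul_of_nonneg_left this (abs_nonneg x)

theorem aux_bound (c p : ℝ) (hc : 0 < c) (hp : 0 < p) :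
    ∃ T : ℝ, 1 ≤ T ∧ ∀ t : ℝ, T ≤ t → (1+t)^2 * Real.exp (-c * t^p) ≤ 4 := by
  have h1 : Tendsto (fun y : ℝ => y ^ (2/p) * Real.exp (-c * y)) atTop (𝓝 0) :=
    tendsto_rpow_mul_exp_neg_mul_atTop_nhds_zero _ _ hc
  have h3 := h1.comp (tendsto_rpow_atTop hp)
  have h4 : ∀ᶠ t : ℝ in atTop, (t^p) ^ (2/p) * Real.exp (-c * t^p) ≤ 1 :=
    h3.eventually (eventually_le_nhds one_pos)
  obtain ⟨T, hT⟩ := (h4.and (eventually_ge_atTop 1)).exists_forall_of_atTop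
  refine ⟨max T 1, le_max_right _ _, fun t ht => ?_⟩
  obtain ⟨h5, h6⟩ := hT t (le_trans (le_max_left _ _) ht)
  have ht1 : (1:ℝ) ≤ t := le_trans (le_max_right _ _) ht
  have ht0 : (0:ℝ) ≤ t := by linarith
  have he : (t^p) ^ (2/p) = t^2 := by
    rw [← Real.rpow_natCast t 2, ← Real.rpow_mul ht0]
    congr 1
    field_simp
    norm_num
  rw [he] at h5
  have hexp : 0 ≤ Real.exp (-c * t^p) := (Real.exp_pos _).le
  nlinarith [sq_nonneg (1-t)]

set_option maxHeartbeats 1000000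

/-- The characteristic function of the Poisson shot-noise interference seen beyond radius `r`
with Rayleigh fading and pathloss `g(x) = β(1+x)^(-α)`, `α > 2`, decays like
`O(exp(-c u^(2/α)))` as `u → ±∞` for some `c > 0`; in particular it is absolutely
integrable over `ℝ`. -/
theorem interference_char_fun_decay
    (lam T P0 α β r : ℝ) (hlam : 0 < lam) (hα : 2 < α) (hβ : 0 < β) (hT : 0 < T)
    (hP0 : 0 < P0) (hr : 0 ≤ r)
    (g : ℝ → ℝ) (hg : ∀ x, g x = β * (1 + x) ^ (-α))
    (B : ℝ → ℂ)
    (hB : ∀ u : ℝ, B u = Complex.exp (-(2 * Real.pi * lam) *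
      ∫ x in Set.Ioi r, (x : ℂ) * (1 - 1 / (1 - Complex.I * u * T * P0 * (g x))))) :
    (∃ c > 0, (fun u : ℝ => ‖B u‖) =O[cocompact ℝ]
        fun u : ℝ => Real.exp (-c * |u| ^ (2 / α))) ∧
      Integrable B := by
  have hα0 : (0:ℝ) < α := by linarith
  have hα0' : α ≠ 0 := ne_of_gt hα0
  have hTP : 0 < T * P0 * β := by positivity
  set K : ℝ := (T * P0 * β) ^ α⁻¹ with hKdef
  have hK : 0 < K := Real.rpow_pos_of_pos hTP _
  clear_value K
  have hgm : Measurable g := by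
    have : g = fun x => β * (1+x)^(-α) := funext hg
    rw [this]
    fun_prop
  have hgpos : ∀ x : ℝ, r < x → 0 < g x := by
    intro x hx
    rw [hg]
    have : (0:ℝ) < 1 + x := by linarith
    positivity
  -- canonical form of the integrand
  have hForm : ∀ (u x : ℝ), Complex.I * (u:ℂ) * (T:ℂ) * (P0:ℂ) * ((g x : ℝ):ℂ)
      = Complex.I * ((u*T*P0*(g x) : ℝ):ℂ) := by
    intro u x; push_cast; ring
  set F : ℝ → ℝ → ℂ := fun u x => (x:ℂ) * (1 - 1/(1 - Complex.I * ((u*T*P0*(g x) : ℝ):ℂ)))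
    with hFdef
  have hBF : ∀ u : ℝ, B u = Complex.exp ((-(2 * Real.pi * lam) : ℝ) *
      ∫ x in Set.Ioi r, F u x) := by
    intro u
    rw [hB u]
    norm_cast
    simp only [hForm, hFdef]
  -- integrability of F u on Ioi r
  have hmaj : IntegrableOn (fun x : ℝ => (1 + ‖x‖) ^ (-(α - 1))) (Set.Ioi r) := by
    have h1 : ((Module.finrank ℝ ℝ : ℝ)) < α - 1 := by
      rw [Module.finrank_self]
      push_cast
      linarith
    exact (integrable_one_add_norm h1).integrableOn
  have hFint : ∀ u : ℝ, IntegrableOn (F u) (Set.Ioi r) := by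
    intro u
    apply Integrable.mono' (hmaj.const_mul (|u| * (T*P0*β)))
    · apply Measurable.aestronglyMeasurable
      fun_prop
    · rw [ae_restrict_iff' measurableSet_Ioi]
      refine ae_of_all _ fun x hx => ?_
      have hx0 : 0 < x := lt_of_le_of_lt hr hx
      have hx1 : (0:ℝ) < 1 + x := by linarith
      have h1 : ‖F u x‖ ≤ |x| * |u*T*P0*(g x)| := key_abs x _
      have h2 : |x| * |u*T*P0*(g x)| ≤ |u| * (T*P0*β) * ((1 + ‖x‖) ^ (-(α - 1))) := by
        rw [abs_of_pos hx0, abs_mul, abs_mul, abs_mul,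
          abs_of_pos hT, abs_of_pos hP0, abs_of_pos (hgpos x hx), hg x,
          Real.norm_eq_abs, abs_of_pos hx0]
        have he : (1 + x) ^ (-(α - 1)) = (1+x) * (1+x)^(-α) := by
          rw [show -(α-1) = 1 + (-α) by ring, Real.rpow_add hx1, Real.rpow_one]
        rw [he]
        have hb : (0:ℝ) ≤ (1+x)^(-α) := Real.rpow_nonneg hx1.le _
        nlinarith [mul_nonneg (mul_nonneg (mul_nonneg (abs_nonneg u) hT.le) hP0.le)
          (mul_nonneg hβ.le hb)]
      exact h1.trans h2
  -- real part
  set R : ℝ → ℝ := fun u => ∫ x in Set.Ioi r,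
      x * ((u*T*P0*(g x))^2/(1+(u*T*P0*(g x))^2)) with hRdef
  have hRe : ∀ u : ℝ, (∫ x in Set.Ioi r, F u x).re = R u := by
    intro u
    have h := integral_re (𝕜 := ℂ) (μ := volume.restrict (Set.Ioi r)) (hFint u)
    simp only [RCLike.re_to_complex] at h
    rw [← h]
    exact setIntegral_congr_fun measurableSet_Ioi fun x _ => key_re x _
  have habs : ∀ u : ℝ, ‖B u‖ = Real.exp (-(2 * Real.pi * lam) * R u) := by
    intro u
    rw [hBF u, Complex.norm_exp, Complex.re_ofReal_mul, hRe u]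
  have hRint : ∀ u : ℝ, IntegrableOn
      (fun x => x * ((u*T*P0*(g x))^2/(1+(u*T*P0*(g x))^2))) (Set.Ioi r) := by
    intro u
    have h := (hFint u).re
    simp only [RCLike.re_to_complex] at h
    exact IntegrableOn.congr_fun h (fun x _ => key_re x _) measurableSet_Ioi
  have hRnonneg : ∀ (u x : ℝ), 0 ≤ x →
      0 ≤ x * ((u*T*P0*(g x))^2/(1+(u*T*P0*(g x))^2)) := by
    intro u x hx
    have : (0:ℝ) < 1 + (u*T*P0*(g x))^2 := by positivity
    positivity
  -- nonnegativity of R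
  have hR0 : ∀ u : ℝ, 0 ≤ R u := by
    intro u
    exact setIntegral_nonneg measurableSet_Ioi fun x hx =>
      hRnonneg u x (le_of_lt (lt_of_le_of_lt hr hx))
  -- measurability of B
  have hBmeas : AEStronglyMeasurable B volume := by
    have m1 : Measurable fun p : ℝ × ℝ => p.1*T*P0*(g p.2) :=
      ((measurable_fst.mul_const T).mul_const P0).mul (hgm.comp measurable_snd)
    have m2 : Measurable fun p : ℝ × ℝ =>
        (1 - Complex.I * ((p.1*T*P0*(g p.2) : ℝ):ℂ)) :=
      measurable_const.sub (measurable_const.mul (Complex.measurable_ofReal.comp m1))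
    have m4 : Measurable fun p : ℝ × ℝ => F p.1 p.2 :=
      (Complex.measurable_ofReal.comp measurable_snd).mul
        (measurable_const.sub (measurable_const.div m2))
    have hsm : StronglyMeasurable fun u : ℝ =>
        ∫ x in Set.Ioi r, F u x :=
      m4.stronglyMeasurable.integral_prod_right'
    have : B = fun u => Complex.exp ((-(2 * Real.pi * lam) : ℝ) *
        ∫ x in Set.Ioi r, F u x) := funext hBF
    rw [this]
    exact (Complex.measurable_exp.comp
      (hsm.measurable.const_mul _)).aestronglyMeasurable
  clear_value R
  -- constants
  set c : ℝ := 2 * Real.pi * lam * (K^2/32) with hcdef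
  have hπ := Real.pi_pos
  have hc : 0 < c := by positivity
  clear_value c
  set U : ℝ := max 1 (max ((2/K)^α) ((4*r/K)^α)) with hUdef
  have hU1 : (1:ℝ) ≤ U := le_max_left _ _
  clear_value U
  have h2π : (0:ℝ) < 2*Real.pi*lam := by positivity
  -- the decay estimate
  have hdecay : ∀ u : ℝ, U ≤ |u| → ‖B u‖ ≤ Real.exp (-c * |u| ^ (2/α)) := by
    intro u hu
    rw [hUdef] at hu
    rw [habs u, Real.exp_le_exp]
    have hu0 : (0:ℝ) < |u| := lt_of_lt_of_le one_pos (le_trans (le_max_left _ _) hu)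
    set t : ℝ := |u| ^ α⁻¹ with htdef
    have ht0 : 0 < t := Real.rpow_pos_of_pos hu0 _
    clear_value t
    have ht2 : 2 ≤ K * t := by
      have h1 : (2/K)^α ≤ |u| :=
        le_trans (le_trans (le_max_left _ _) (le_max_right 1 _)) hu
      have h2 : ((2/K)^α)^α⁻¹ ≤ t := by
        rw [htdef]
        exact Real.rpow_le_rpow (Real.rpow_nonneg (by positivity) _) h1 (by positivity)
      rw [Real.rpow_rpow_inv (by positivity) hα0'] at h2
      calc (2:ℝ) = K * (2/K) := by field_simp
        _ ≤ K * t := mul_le_mul_of_nonneg_left h2 hK.le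
    have ht4r : 4*r ≤ K*t := by
      have h1 : (4*r/K)^α ≤ |u| :=
        le_trans (le_trans (le_max_right _ _) (le_max_right 1 _)) hu
      have h2 : ((4*r/K)^α)^α⁻¹ ≤ t := by
        rw [htdef]
        exact Real.rpow_le_rpow (Real.rpow_nonneg (by positivity) _) h1 (by positivity)
      rw [Real.rpow_rpow_inv (by positivity) hα0'] at h2
      calc 4*r = K * (4*r/K) := by field_simp
        _ ≤ K * t := mul_le_mul_of_nonneg_left h2 hK.le
    set s : ℝ := K*t - 1 with hsdef
    clear_value s
    have hs1 : K*t/2 ≤ s := by rw [hsdef]; linarith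
    have hs0 : 0 < s := by rw [hsdef]; linarith
    have hsr : 2*r ≤ s := by rw [hsdef]; linarith
    have hrs : r ≤ s := by linarith
    have hstep1 : (∫ x in Set.Ioc r s,
        x * ((u*T*P0*(g x))^2/(1+(u*T*P0*(g x))^2))) ≤ R u := by
      rw [hRdef]
      beta_reduce
      refine setIntegral_mono_set (hRint u) ?_ ?_
      · rw [EventuallyLE, ae_restrict_iff' measurableSet_Ioi]
        exact ae_of_all _ fun x hx =>
          hRnonneg u x (le_of_lt (lt_of_le_of_lt hr hx))
      · exact HasSubset.Subset.eventuallyLE Set.Ioc_subset_Ioi_self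
    have hhalf : ∀ x ∈ Set.Ioc r s,
        x * (1/2) ≤ x * ((u*T*P0*(g x))^2/(1+(u*T*P0*(g x))^2)) := by
      intro x hx
      have hx0 : 0 < x := lt_of_le_of_lt hr hx.1
      have hx1 : (0:ℝ) < 1+x := by linarith
      have h1x : (1+x) ≤ K*t := by
        have := hx.2
        rw [hsdef] at this
        linarith
      have hpow : (1+x)^α ≤ T*P0*β*|u| := by
        calc (1+x)^α ≤ (K*t)^α := Real.rpow_le_rpow hx1.le h1x hα0.le
          _ = K^α * t^α := Real.mul_rpow hK.le ht0.le
          _ = (T*P0*β) * |u| := by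
              rw [hKdef, htdef, Real.rpow_inv_rpow hTP.le hα0',
                Real.rpow_inv_rpow (abs_nonneg u) hα0']
      have hposα : 0 < (1+x)^α := Real.rpow_pos_of_pos hx1 _
      have ha1 : 1 ≤ |u*T*P0*(g x)| := by
        have heq : |u*T*P0*(g x)| = |u| * (T*P0*β) * ((1+x)^α)⁻¹ := by
          rw [hg x, abs_mul, abs_mul, abs_mul, abs_of_pos hT, abs_of_pos hP0,
            abs_of_pos (by positivity : (0:ℝ) < β * (1+x)^(-α)),
            Real.rpow_neg hx1.le]
          ring
        rw [heq, ← div_eq_mul_inv, le_div_iff₀ hposα, one_mul]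
        linarith [hpow]
      have ha2 : 1 ≤ (u*T*P0*(g x))^2 := by
        have := sq_abs (u*T*P0*(g x))
        nlinarith
      have hq : (1:ℝ)/2 ≤ (u*T*P0*(g x))^2/(1+(u*T*P0*(g x))^2) := by
        rw [div_le_div_iff₀ two_pos (by positivity)]
        nlinarith
      exact mul_le_mul_of_nonneg_left hq hx0.le
    have hstep2 : (∫ x in Set.Ioc r s, x*(1/2)) ≤ ∫ x in Set.Ioc r s,
        x * ((u*T*P0*(g x))^2/(1+(u*T*P0*(g x))^2)) :=
      setIntegral_mono_on ((continuous_id.mul continuous_const).integrableOn_Ioc)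
        ((hRint u).mono_set Set.Ioc_subset_Ioi_self) measurableSet_Ioc hhalf
    have hval : (∫ x in Set.Ioc r s, x*(1/2)) = (s^2 - r^2)/4 := by
      rw [← intervalIntegral.integral_of_le hrs,
        intervalIntegral.integral_mul_const, integral_id]
      ring
    have h1 : |u|^(2/α) = t^2 := by
      rw [htdef, ← Real.rpow_natCast (|u| ^ α⁻¹) 2, ← Real.rpow_mul (abs_nonneg u)]
      norm_num
      rw [div_eq_mul_inv, mul_comm]
    have hfin : K^2/32 * |u|^(2/α) ≤ R u := by
      have h2 : s^2/8 ≤ (s^2 - r^2)/4 := by nlinarith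
      have h3 : (K*t/2)^2 ≤ s^2 := by nlinarith
      calc K^2/32 * |u|^(2/α) = (K*t/2)^2/8 := by rw [h1]; ring
        _ ≤ s^2/8 := by linarith
        _ ≤ (s^2 - r^2)/4 := h2
        _ = ∫ x in Set.Ioc r s, x*(1/2) := hval.symm
        _ ≤ _ := hstep2
        _ ≤ R u := hstep1
    have hcc : c * |u|^(2/α) ≤ 2*Real.pi*lam * R u := by
      calc c * |u|^(2/α) = (2*Real.pi*lam) * (K^2/32 * |u|^(2/α)) := by
            rw [hcdef]; ring
        _ ≤ (2*Real.pi*lam) * R u := mul_le_mul_of_nonneg_left hfin h2π.le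
    linarith
  -- eventual membership
  have hcocompact : ∀ᶠ u : ℝ in cocompact ℝ, U ≤ |u| := by
    rw [cocompact_eq_atBot_atTop, eventually_sup]
    constructor
    · filter_upwards [eventually_le_atBot (-U)] with u hu
      rw [abs_of_nonpos (by linarith)]
      linarith
    · filter_upwards [eventually_ge_atTop U] with u hu
      rw [abs_of_nonneg (by linarith)]
      linarith
  refine ⟨⟨c, hc, ?_⟩, ?_⟩
  · rw [isBigO_iff]
    refine ⟨1, ?_⟩
    filter_upwards [hcocompact] with u hu
    have h := hdecay u hu
    rw [Real.norm_eq_abs, Real.norm_eq_abs, abs_of_nonneg (norm_nonneg _),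
      Real.abs_exp, one_mul]
    exact h
  · obtain ⟨T₀, hT₀1, hT₀⟩ := aux_bound c (2/α) hc (by positivity)
    set U' : ℝ := max U T₀ with hU'def
    set C : ℝ := max 4 ((1+U')^2) with hCdef
    have hfr : ((Module.finrank ℝ ℝ : ℝ)) < 2 := by
      rw [Module.finrank_self]; norm_num
    have hint : Integrable (fun u : ℝ => C * (1+‖u‖)^(-(2:ℝ))) :=
      (integrable_one_add_norm hfr).const_mul C
    refine Integrable.mono' hint hBmeas (ae_of_all _ fun u => ?_)
    have hBnorm : ‖B u‖ = Real.exp (-(2*Real.pi*lam) * R u) := by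
      rw [habs u]
    have hpow : (1+‖u‖)^(-(2:ℝ)) = ((1+|u|)^2)⁻¹ := by
      rw [Real.norm_eq_abs, Real.rpow_neg (by positivity), Real.rpow_two]
    rw [hpow]
    have hp2 : (0:ℝ) < (1+|u|)^2 := by positivity
    rcases le_or_gt U' |u| with h | h
    · have h4 := hT₀ |u| (le_trans (le_trans (le_max_right U T₀) (le_refl U')) h)
      have hd := hdecay u (le_trans (le_trans (le_max_left U T₀) (le_refl U')) h)
      have hexp : Real.exp (-c * |u|^(2/α)) ≤ 4 * ((1+|u|)^2)⁻¹ := by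
        rw [← div_eq_mul_inv, le_div_iff₀ hp2, mul_comm]
        exact h4
      calc ‖B u‖ = ‖B u‖ := rfl
        _ ≤ Real.exp (-c * |u|^(2/α)) := hd
        _ ≤ 4 * ((1+|u|)^2)⁻¹ := hexp
        _ ≤ C * ((1+|u|)^2)⁻¹ :=
            mul_le_mul_of_nonneg_right (le_max_left _ _) (by positivity)
    · have hle1 : ‖B u‖ ≤ 1 := by
        rw [hBnorm]
        have harg : -(2*Real.pi*lam) * R u ≤ 0 := by
          have := hR0 u
          nlinarith
        calc Real.exp (-(2*Real.pi*lam) * R u) ≤ Real.exp 0 :=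
              Real.exp_le_exp.mpr harg
          _ = 1 := Real.exp_zero
      have hb : (1+|u|)^2 ≤ (1+U')^2 := by nlinarith [abs_nonneg u, h.le]
      calc ‖B u‖ ≤ 1 := hle1
        _ ≤ (1+U')^2 * ((1+|u|)^2)⁻¹ := by
            rw [← div_eq_mul_inv, le_div_iff₀ hp2, one_mul]
            exact hb
        _ ≤ C * ((1+|u|)^2)⁻¹ :=
            mul_le_mul_of_nonneg_right (le_max_right _ _) (by positivity)
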